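/- Let E be a metric space homeomorphic to a Borel subset of a Polish space. Then UC_b(E) is dense in C_b(E) with respect to the topology τ_K generated by the seminorms p_{K,μ}(f) = sup_{x∈K}|f(x)| + |∫_E f dμ| (K ⊆ E compact, μ ∈ ca(E)). -/

import Mathlib

open Filter Topology MeasureTheory

/-- Integration of a function against a finite countably additive signed Borel measure,
via its Jordan decomposition. -/
noncomputable def intSM' {E : Type*} [MeasurableSpace E]
    (s : SignedMeasure E) (f : E → ℝ) : ℝ :=
  (∫ x, f x ∂s.toJordanDecomposition.posPart) -
    ∫ x, f x ∂s.toJordanDecomposition.negPart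

/-- The locally convex topology τ_K on C_b(E). -/
noncomputable def tauK (E : Type*) [MetricSpace E] [MeasurableSpace E] [BorelSpace E] :
    TopologicalSpace (BoundedContinuousFunction E ℝ) :=
  (⨅ (K : Set E) (_ : IsCompact K) (_ : K.Nonempty),
      TopologicalSpace.induced
        (fun f : BoundedContinuousFunction E ℝ => UniformFun.ofFun fun x : K => f x)
        inferInstance) ⊓
    ⨅ s : SignedMeasure E,
      TopologicalSpace.induced (fun f : BoundedContinuousFunction E ℝ => intSM' s ⇑f)
        inferInstance



section aux
open Metric Set
open scoped ENNReal NNReal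

/-- One approximation step for Ulam's tightness theorem. -/
lemma cover_step {X : Type*} [MetricSpace X] [SecondCountableTopology X]
    [MeasurableSpace X] [OpensMeasurableSpace X]
    (μ : Measure X) [IsFiniteMeasure μ] {r : ℝ} (hr : 0 < r) {δ : ℝ≥0∞} (hδ : 0 < δ) :
    ∃ t : Set X, t.Finite ∧ μ (⋃ x ∈ t, closedBall x r)ᶜ < δ := by
  rcases isEmpty_or_nonempty X with hX | hX
  · refine ⟨∅, finite_empty, ?_⟩
    rw [Set.eq_empty_of_isEmpty ((⋃ x ∈ (∅ : Set X), closedBall x r)ᶜ), measure_empty]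
    exact hδ
  · obtain ⟨u, hu⟩ := TopologicalSpace.exists_dense_seq X
    set A : ℕ → Set X := fun N => ⋃ i ∈ Finset.range N, closedBall (u i) r with hA
    have hAm : ∀ N, MeasurableSet (A N) := fun N =>
      MeasurableSet.biUnion (Finset.range N).countable_toSet fun i _ => measurableSet_closedBall
    have hmono : Antitone fun N => (A N)ᶜ := by
      intro a b hab
      apply compl_subset_compl.mpr
      intro x hx
      simp only [hA, mem_iUnion, Finset.mem_range, exists_prop] at hx ⊢
      obtain ⟨i, hi, h⟩ := hx
      exact ⟨i, lt_of_lt_of_le hi hab, h⟩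
    have hunion : ⋃ N, A N = univ := by
      ext x
      simp only [mem_univ, iff_true, mem_iUnion]
      obtain ⟨i, hi⟩ : ∃ i, u i ∈ ball x r := hu.exists_mem_open isOpen_ball ⟨x, mem_ball_self hr⟩
      exact ⟨i + 1, Set.mem_biUnion (Finset.self_mem_range_succ i)
        (by rw [mem_closedBall, dist_comm]; exact (mem_ball.mp hi).le)⟩
    have hinter : ⋂ N, (A N)ᶜ = ∅ := by
      rw [← compl_iUnion, hunion, compl_univ]
    have htendsto : Tendsto (fun N => μ (A N)ᶜ) atTop (𝓝 (μ (⋂ N, (A N)ᶜ))) :=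
      tendsto_measure_iInter_atTop (fun N => (hAm N).compl.nullMeasurableSet) hmono
        ⟨0, measure_ne_top μ _⟩
    rw [hinter, measure_empty] at htendsto
    have := htendsto.eventually (gt_mem_nhds hδ)
    obtain ⟨N, hN⟩ := this.exists
    refine ⟨u '' ↑(Finset.range N), (Finset.range N).finite_toSet.image u, ?_⟩
    have himg : ⋃ x ∈ u '' ↑(Finset.range N), closedBall x r = A N := by
      rw [Set.biUnion_image]; simp [hA]
    rw [himg]
    exact hN

/-- Ulam's theorem: a finite measure on a complete second-countable metric space is tight. -/
lemma ulam {X : Type*} [MetricSpace X] [MeasurableSpace X]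
    [OpensMeasurableSpace X] [SecondCountableTopology X] [CompleteSpace X]
    (μ : Measure X) [IsFiniteMeasure μ] {ε : ℝ≥0∞} (hε : ε ≠ 0) :
    ∃ K : Set X, IsCompact K ∧ μ Kᶜ < ε := by
  obtain ⟨δ, hδpos, hδsum⟩ := ENNReal.exists_pos_sum_of_countable hε ℕ
  have step : ∀ n : ℕ, ∃ t : Set X, t.Finite ∧
      μ (⋃ x ∈ t, closedBall x (1 / (n + 1)))ᶜ < δ n := fun n =>
    cover_step μ (by positivity) (by exact_mod_cast hδpos n)
  choose t ht hμt using step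
  set A : ℕ → Set X := fun n => ⋃ x ∈ t n, closedBall x (1 / (n + 1)) with hA
  refine ⟨⋂ n, A n, ?_, ?_⟩
  · apply TotallyBounded.isCompact_of_isClosed
    · rw [Metric.totallyBounded_iff]
      intro r hr
      obtain ⟨n, hn⟩ := exists_nat_one_div_lt hr
      refine ⟨t n, ht n, ?_⟩
      refine (Set.iInter_subset A n).trans ?_
      refine Set.iUnion₂_subset fun x hx => ?_
      refine subset_trans ?_ (Set.subset_biUnion_of_mem hx)
      exact closedBall_subset_ball hn
    · exact isClosed_iInter fun n => (ht n).isClosed_biUnion fun x _ => isClosed_closedBall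
  · rw [Set.compl_iInter]
    calc μ (⋃ n, (A n)ᶜ) ≤ ∑' n, μ (A n)ᶜ := measure_iUnion_le _
      _ ≤ ∑' n, (δ n : ℝ≥0∞) := ENNReal.tsum_le_tsum fun n => (hμt n).le
      _ < ε := hδsum

/-- Tightness of finite measures on a Polish space. -/
lemma tight_polish {P : Type*} [MetricSpace P] [PolishSpace P] [MeasurableSpace P]
    [BorelSpace P] (ν : Measure P) [IsFiniteMeasure ν] {ε : ℝ≥0∞} (hε : ε ≠ 0) :
    ∃ K : Set P, IsCompact K ∧ ν Kᶜ < ε := by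
  have h0 : SecondCountableTopology P := PolishSpace.toSecondCountableTopology
  have h1 : OpensMeasurableSpace P := inferInstance
  obtain ⟨m, hm, hc⟩ := TopologicalSpace.IsCompletelyMetrizableSpace.complete (X := P)
  have hsc : @SecondCountableTopology P m.toUniformSpace.toTopologicalSpace := hm.symm ▸ h0
  have hom : @OpensMeasurableSpace P m.toUniformSpace.toTopologicalSpace ‹MeasurableSpace P› :=
    hm.symm ▸ h1
  obtain ⟨K, hK, hKν⟩ := @ulam P m ‹MeasurableSpace P› hom hsc hc ν ‹IsFiniteMeasure ν› ε hε
  exact ⟨K, hm ▸ hK, hKν⟩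

/-- Tightness of finite measures on a space homeomorphic to a Borel subset of a Polish space. -/
lemma tightE {E : Type*} [MetricSpace E] [MeasurableSpace E] [BorelSpace E]
    {P : Type*} [MetricSpace P] [PolishSpace P] [MeasurableSpace P] [BorelSpace P]
    {B : Set P} (hB : MeasurableSet B) (e : E ≃ₜ B) (μ : Measure E) [IsFiniteMeasure μ]
    {ε : ℝ≥0∞} (hε : ε ≠ 0) :
    ∃ C : Set E, IsCompact C ∧ μ Cᶜ < ε := by
  set φ : E → P := fun x => (e x : P) with hφdef
  have hφc : Continuous φ := continuous_subtype_val.comp e.continuous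
  have hφ : Measurable φ := hφc.measurable
  set ν : Measure P := μ.map φ with hν
  haveI : IsFiniteMeasure ν := by
    constructor
    rw [hν, Measure.map_apply hφ MeasurableSet.univ]
    exact measure_lt_top μ _
  have hνB : ν Bᶜ = 0 := by
    rw [hν, Measure.map_apply hφ hB.compl]
    convert measure_empty (μ := μ)
    ext x
    simp [hφdef, (e x).2]
  have hε2 : ε / 2 ≠ 0 := (ENNReal.half_pos hε).ne'
  obtain ⟨F, hFB, hFclosed, hF⟩ : ∃ F, F ⊆ B ∧ IsClosed F ∧ ν (B \ F) < ε / 2 := by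
    obtain ⟨F, hFB, hFc, hFν⟩ := hB.exists_isClosed_diff_lt (measure_ne_top ν B)
      (pos_iff_ne_zero.mpr hε2).ne'
    exact ⟨F, hFB, hFc, hFν⟩
  obtain ⟨K0, hK0c, hK0⟩ := tight_polish ν hε2
  set K := F ∩ K0 with hK
  have hKc : IsCompact K := hK0c.inter_left hFclosed
  have hKB : K ⊆ B := Set.inter_subset_left.trans hFB
  have hKm : MeasurableSet K := hKc.isClosed.measurableSet
  -- the preimage under φ is compact
  have hsub : IsCompact (Subtype.val ⁻¹' K : Set B) := by
    rw [Topology.IsEmbedding.isCompact_iff Topology.IsEmbedding.subtypeVal]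
    have : Subtype.val '' (Subtype.val ⁻¹' K : Set B) = K := by
      rw [Set.image_preimage_eq_iff.mpr]
      rwa [Subtype.range_coe]
    rwa [this]
  have hCeq : φ ⁻¹' K = e.symm '' (Subtype.val ⁻¹' K : Set B) := by
    ext x
    constructor
    · intro hx
      exact ⟨e x, hx, e.symm_apply_apply x⟩
    · rintro ⟨y, hy, rfl⟩
      simpa [hφdef] using hy
  refine ⟨φ ⁻¹' K, hCeq ▸ hsub.image e.symm.continuous, ?_⟩
  have : μ (φ ⁻¹' K)ᶜ = ν Kᶜ := by
    rw [hν, Measure.map_apply hφ hKm.compl, Set.preimage_compl]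
  rw [this]
  have hsplit : Kᶜ ⊆ (B \ F) ∪ (K0ᶜ ∪ Bᶜ) := by
    intro x hx
    by_cases hxB : x ∈ B
    · by_cases hxF : x ∈ F
      · have : x ∉ K0 := fun h => hx ⟨hxF, h⟩
        exact Or.inr (Or.inl this)
      · exact Or.inl ⟨hxB, hxF⟩
    · exact Or.inr (Or.inr hxB)
  calc ν Kᶜ ≤ ν ((B \ F) ∪ (K0ᶜ ∪ Bᶜ)) := measure_mono hsplit
    _ ≤ ν (B \ F) + (ν K0ᶜ + ν Bᶜ) := (measure_union_le _ _).trans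
        (by gcongr; exact measure_union_le _ _)
    _ = ν (B \ F) + ν K0ᶜ := by rw [hνB, add_zero]
    _ < ε / 2 + ε / 2 := ENNReal.add_lt_add hF hK0
    _ = ε := ENNReal.add_halves ε

/-- Uniformly continuous approximation with the same bound, accurate on a compact set. -/
lemma lipapprox {E : Type*} [MetricSpace E] (f : BoundedContinuousFunction E ℝ)
    {C : Set E} (hC : IsCompact C) {ε : ℝ} (hε : 0 < ε) :
    ∃ g : BoundedContinuousFunction E ℝ, UniformContinuous ⇑g ∧ ‖g‖ ≤ ‖f‖ ∧
      ∀ x ∈ C, |g x - f x| ≤ ε := by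
  rcases C.eq_empty_or_nonempty with rfl | hne
  · refine ⟨0, ?_, by simp, by simp⟩
    rw [BoundedContinuousFunction.coe_zero]
    exact uniformContinuous_const
  obtain ⟨δ, hδ, hδf⟩ : ∃ δ > 0, ∀ x ∈ C, ∀ y ∈ C, dist x y < δ → dist (f x) (f y) < ε := by
    have := (hC.uniformContinuousOn_of_continuous f.continuous.continuousOn)
    exact Metric.uniformContinuousOn_iff.mp this ε hε
  set M : ℝ := ‖f‖ with hM
  have hM0 : 0 ≤ M := norm_nonneg f
  have hfb : ∀ x : E, |f x| ≤ M := fun x => by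
    simpa [Real.norm_eq_abs] using f.norm_coe_le_norm x
  set n : ℝ := 2 * M / δ + 1 with hn
  have hn0 : 0 < n := by positivity
  have hnδ : 2 * M ≤ n * δ := by
    rw [hn, add_mul, div_mul_cancel₀ _ hδ.ne', one_mul]
    linarith
  haveI : Nonempty C := hne.to_subtype
  set g₀ : E → ℝ := fun x => ⨅ y : C, (f y + n * dist x y) with hg₀
  have hbdd : ∀ x : E, BddBelow (Set.range fun y : C => f y + n * dist x y) := by
    intro x
    refine ⟨-M, ?_⟩
    rintro _ ⟨y, rfl⟩
    show -M ≤ f ↑y + n * dist x ↑y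
    have h1 := (abs_le.mp (hfb y)).1
    have h2 : 0 ≤ n * dist x y := mul_nonneg hn0.le dist_nonneg
    linarith
  have key : ∀ x x' : E, g₀ x ≤ g₀ x' + n * dist x x' := by
    intro x x'
    rw [← sub_le_iff_le_add]
    refine le_ciInf fun y => ?_
    have h1 : g₀ x ≤ f y + n * dist x y := ciInf_le (hbdd x) y
    have h2 : dist x (y : E) ≤ dist x x' + dist x' y := dist_triangle x x' y
    have h3 : n * dist x (y : E) ≤ n * (dist x x' + dist x' y) :=
      mul_le_mul_of_nonneg_left h2 hn0.le
    linarith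
  have hlow : ∀ x, -M ≤ g₀ x := by
    intro x
    refine le_ciInf fun y => ?_
    show -M ≤ f ↑y + n * dist x ↑y
    have h1 := (abs_le.mp (hfb y)).1
    have h2 : 0 ≤ n * dist x y := mul_nonneg hn0.le dist_nonneg
    linarith
  have hCle : ∀ x ∈ C, g₀ x ≤ f x := by
    intro x hx
    have := ciInf_le (hbdd x) (⟨x, hx⟩ : C)
    simpa using this
  have hCge : ∀ x ∈ C, f x - ε ≤ g₀ x := by
    intro x hx
    refine le_ciInf fun y => ?_
    show f x - ε ≤ f ↑y + n * dist x ↑y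
    by_cases hd : dist x (y : E) < δ
    · have h1 : dist (f x) (f y) < ε := hδf x hx y y.2 hd
      rw [Real.dist_eq] at h1
      have h2 := (abs_lt.mp h1).2
      have h3 : 0 ≤ n * dist x (y : E) := mul_nonneg hn0.le dist_nonneg
      linarith
    · push_neg at hd
      have h1 : n * δ ≤ n * dist x (y : E) := mul_le_mul_of_nonneg_left hd hn0.le
      have h2 := (abs_le.mp (hfb y)).1
      have h3 := (abs_le.mp (hfb x)).2
      linarith
  have hlip₀ : LipschitzWith (Real.toNNReal n) g₀ := by
    apply LipschitzWith.of_dist_le_mul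
    intro x x'
    rw [Real.dist_eq, Real.coe_toNNReal n hn0.le, abs_sub_le_iff]
    constructor
    · have := key x x'; linarith
    · have := key x' x; rw [dist_comm] at this; linarith
  set g₁ : E → ℝ := fun x => max (-M) (min (g₀ x) M) with hg₁
  have hlip₁ : LipschitzWith (Real.toNNReal n) g₁ :=
    (hlip₀.min_const M).const_max (-M)
  have hb₁ : ∀ x, |g₁ x| ≤ M := by
    intro x
    rw [abs_le]
    constructor
    · exact le_max_left _ _
    · exact max_le (by linarith) (min_le_right _ _)
  refine ⟨BoundedContinuousFunction.mkOfBound ⟨g₁, hlip₁.continuous⟩ (2 * M) ?_,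
    ?_, ?_, ?_⟩
  · intro x y
    show dist (g₁ x) (g₁ y) ≤ 2 * M
    rw [Real.dist_eq, abs_sub_le_iff]
    constructor <;> linarith [abs_le.mp (hb₁ x), abs_le.mp (hb₁ y)]
  · exact hlip₁.uniformContinuous
  · rw [BoundedContinuousFunction.norm_le hM0]
    intro x
    simpa [Real.norm_eq_abs] using hb₁ x
  · intro x hx
    have h1 : g₁ x = g₀ x := by
      show max (-M) (min (g₀ x) M) = g₀ x
      rw [min_eq_left ((hCle x hx).trans (abs_le.mp (hfb x)).2),
        max_eq_right (hlow x)]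
    show |g₁ x - f x| ≤ ε
    rw [h1, abs_sub_le_iff]
    exact ⟨by linarith [hCle x hx, hε.le], by linarith [hCge x hx]⟩

lemma intbound {E : Type*} [MetricSpace E] [MeasurableSpace E] [BorelSpace E]
    (ν : Measure E) [IsFiniteMeasure ν] (f g : BoundedContinuousFunction E ℝ)
    {C : Set E} (hC : MeasurableSet C) {a M : ℝ} (ha : 0 ≤ a) (hM : 0 ≤ M)
    (h1 : ∀ x ∈ C, |g x - f x| ≤ a) (h2 : ∀ x, |g x - f x| ≤ M) :
    |∫ x, (g x - f x) ∂ν| ≤ a * (ν Set.univ).toReal + M * (ν Cᶜ).toReal := by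
  have hint : Integrable (fun x => g x - f x) ν := (g.integrable ν).sub (f.integrable ν)
  rw [← integral_add_compl hC hint]
  have e1 : ‖∫ x in C, (g x - f x) ∂ν‖ ≤ a * (ν C).toReal :=
    norm_setIntegral_le_of_norm_le_const_ae' (measure_lt_top ν C)
      (Filter.Eventually.of_forall fun x hx => by simpa [Real.norm_eq_abs] using h1 x hx)
  have e2 : ‖∫ x in Cᶜ, (g x - f x) ∂ν‖ ≤ M * (ν Cᶜ).toReal :=
    norm_setIntegral_le_of_norm_le_const_ae' (measure_lt_top ν Cᶜ)
      (Filter.Eventually.of_forall fun x _ => by simpa [Real.norm_eq_abs] using h2 x)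
  rw [Real.norm_eq_abs] at e1 e2
  have e3 : (ν C).toReal ≤ (ν Set.univ).toReal :=
    ENNReal.toReal_mono (measure_ne_top ν _) (measure_mono (Set.subset_univ _))
  calc |∫ x in C, (g x - f x) ∂ν + ∫ x in Cᶜ, (g x - f x) ∂ν|
      ≤ |∫ x in C, (g x - f x) ∂ν| + |∫ x in Cᶜ, (g x - f x) ∂ν| := abs_add_le _ _
    _ ≤ a * (ν C).toReal + M * (ν Cᶜ).toReal := add_le_add e1 e2
    _ ≤ a * (ν Set.univ).toReal + M * (ν Cᶜ).toReal := by
        have := mul_le_mul_of_nonneg_left e3 ha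
        linarith

lemma intSM'_diff_bound {E : Type*} [MetricSpace E] [MeasurableSpace E] [BorelSpace E]
    (s : SignedMeasure E) (f g : BoundedContinuousFunction E ℝ)
    {C : Set E} (hC : MeasurableSet C) {a M : ℝ} (ha : 0 ≤ a) (hM : 0 ≤ M)
    (h1 : ∀ x ∈ C, |g x - f x| ≤ a) (h2 : ∀ x, |g x - f x| ≤ M) :
    |intSM' s ⇑g - intSM' s ⇑f| ≤
      a * ((s.toJordanDecomposition.posPart Set.univ).toReal
          + (s.toJordanDecomposition.negPart Set.univ).toReal)
        + M * ((s.toJordanDecomposition.posPart Cᶜ).toReal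
          + (s.toJordanDecomposition.negPart Cᶜ).toReal) := by
  set νp := s.toJordanDecomposition.posPart
  set νn := s.toJordanDecomposition.negPart
  have hp : intSM' s ⇑g - intSM' s ⇑f =
      (∫ x, (g x - f x) ∂νp) - ∫ x, (g x - f x) ∂νn := by
    rw [intSM', intSM', integral_sub (g.integrable νp) (f.integrable νp),
      integral_sub (g.integrable νn) (f.integrable νn)]
    ring
  rw [hp]
  have e1 := intbound νp f g hC ha hM h1 h2
  have e2 := intbound νn f g hC ha hM h1 h2
  calc |(∫ x, (g x - f x) ∂νp) - ∫ x, (g x - f x) ∂νn|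
      ≤ |∫ x, (g x - f x) ∂νp| + |∫ x, (g x - f x) ∂νn| := abs_sub _ _
    _ ≤ _ := by linarith

lemma helperK {E : Type*} [MetricSpace E] (f : BoundedContinuousFunction E ℝ)
    {V : Set (BoundedContinuousFunction E ℝ)}
    (hV : V ∈ ⨅ (K : Set E), ⨅ (_ : IsCompact K), ⨅ (_ : K.Nonempty),
      Filter.comap (fun g : BoundedContinuousFunction E ℝ => UniformFun.ofFun fun x : K => g x)
        (𝓝 (UniformFun.ofFun fun x : K => f x))) :
    ∃ K : Set E, IsCompact K ∧ ∃ δ > 0, ∀ g : BoundedContinuousFunction E ℝ,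
      (∀ x ∈ K, dist (g x) (f x) < δ) → g ∈ V := by
  classical
  rw [Filter.mem_iInf] at hV
  obtain ⟨I, hIfin, Vs, hVs, rfl⟩ := hV
  haveI := hIfin.fintype
  set S : I → Set E := fun i =>
    if IsCompact (i : Set E) ∧ (i : Set E).Nonempty then (i : Set E) else ∅ with hS
  have key : ∀ i : I, ∃ δ > 0, ∀ g : BoundedContinuousFunction E ℝ,
      (∀ x ∈ S i, dist (g x) (f x) < δ) → g ∈ Vs i := by
    intro i
    by_cases hc : IsCompact (i : Set E) ∧ (i : Set E).Nonempty
    · have hmem := hVs i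
      rw [iInf_pos hc.1, iInf_pos hc.2] at hmem
      obtain ⟨δ, hδ, hsub⟩ := ((UniformFun.hasBasis_nhds_of_basis (↥(i : Set E)) ℝ
        (UniformFun.ofFun fun x : (i : Set E) => f x)
        Metric.uniformity_basis_dist).comap _).mem_iff.mp hmem
      refine ⟨δ, hδ, fun g hg => hsub ?_⟩
      simp only [Set.mem_preimage, Set.mem_setOf_eq, UniformFun.gen]
      intro x
      have hx : (x : E) ∈ S i := by rw [hS]; simp only [if_pos hc]; exact x.2
      have := hg x hx
      rw [dist_comm] at this
      exact this
    · have hmem := hVs i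
      rcases not_and_or.mp hc with h | h
      · rw [iInf_neg h] at hmem
        exact ⟨1, one_pos, fun g _ => (Filter.mem_top.mp hmem) ▸ Set.mem_univ g⟩
      · rw [iInf_neg h, iInf_top] at hmem
        exact ⟨1, one_pos, fun g _ => (Filter.mem_top.mp hmem) ▸ Set.mem_univ g⟩
  choose δ hδpos hδ using key
  rcases isEmpty_or_nonempty I with hI | hI
  · refine ⟨∅, isCompact_empty, 1, one_pos, fun g _ => ?_⟩
    rw [Set.iInter_of_empty]
    exact Set.mem_univ g
  · haveI : Nonempty I := hI
    refine ⟨⋃ i : I, S i, isCompact_iUnion fun i => ?_, ?_⟩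
    · show IsCompact (if IsCompact (i : Set E) ∧ (i : Set E).Nonempty then (i : Set E) else ∅)
      split_ifs with h
      exacts [h.1, isCompact_empty]
    · refine ⟨Finset.univ.inf' Finset.univ_nonempty δ, ?_, fun g hg => ?_⟩
      · rw [gt_iff_lt, Finset.lt_inf'_iff]
        exact fun i _ => hδpos i
      · refine Set.mem_iInter.mpr fun i => hδ i g fun x hx => ?_
        exact lt_of_lt_of_le (hg x (Set.mem_iUnion.mpr ⟨i, hx⟩))
          (Finset.inf'_le δ (Finset.mem_univ i))

lemma helperM {E : Type*} [MetricSpace E] [MeasurableSpace E]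
    (f : BoundedContinuousFunction E ℝ)
    {W : Set (BoundedContinuousFunction E ℝ)}
    (hW : W ∈ ⨅ s : SignedMeasure E,
      Filter.comap (fun g : BoundedContinuousFunction E ℝ => intSM' s ⇑g) (𝓝 (intSM' s ⇑f))) :
    ∃ I : Finset (SignedMeasure E), ∃ δ > 0, ∀ g : BoundedContinuousFunction E ℝ,
      (∀ s ∈ I, |intSM' s ⇑g - intSM' s ⇑f| < δ) → g ∈ W := by
  classical
  rw [Filter.mem_iInf] at hW
  obtain ⟨I0, hIfin, Vs, hVs, rfl⟩ := hW
  haveI := hIfin.fintype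
  have key : ∀ i : I0, ∃ δ > 0, ∀ g : BoundedContinuousFunction E ℝ,
      |intSM' (i : SignedMeasure E) ⇑g - intSM' (i : SignedMeasure E) ⇑f| < δ → g ∈ Vs i := by
    intro i
    obtain ⟨δ, hδ, hsub⟩ := ((Metric.nhds_basis_ball).comap
      (fun g : BoundedContinuousFunction E ℝ => intSM' (i : SignedMeasure E) ⇑g)).mem_iff.mp
      (hVs i)
    refine ⟨δ, hδ, fun g hg => hsub ?_⟩
    simp only [Set.mem_preimage, Metric.mem_ball, Real.dist_eq]
    exact hg
  choose δ hδpos hδ using key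
  rcases isEmpty_or_nonempty I0 with hI | hI
  · refine ⟨∅, 1, one_pos, fun g _ => ?_⟩
    rw [Set.iInter_of_empty]
    exact Set.mem_univ g
  · haveI : Nonempty I0 := hI
    refine ⟨hIfin.toFinset, Finset.univ.inf' Finset.univ_nonempty δ, ?_, fun g hg => ?_⟩
    · rw [gt_iff_lt, Finset.lt_inf'_iff]
      exact fun i _ => hδpos i
    · refine Set.mem_iInter.mpr fun i => hδ i g ?_
      exact lt_of_lt_of_le (hg i (hIfin.mem_toFinset.mpr i.2))
        (Finset.inf'_le δ (Finset.mem_univ i))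

end aux

/-- If the metric space E is homeomorphic to a Borel subset of a Polish
space, then the bounded uniformly continuous functions are dense in (C_b(E), τ_K). -/
theorem stmt18 {E : Type*} [MetricSpace E] [MeasurableSpace E] [BorelSpace E]
    (P : Type*) [MetricSpace P] [PolishSpace P] [MeasurableSpace P] [BorelSpace P]
    (B : Set P) (hB : MeasurableSet B) (e : E ≃ₜ B) :
    @Dense (BoundedContinuousFunction E ℝ) (tauK E)
      {f : BoundedContinuousFunction E ℝ | UniformContinuous ⇑f} := by
  classical
  letI : TopologicalSpace (BoundedContinuousFunction E ℝ) := tauK E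
  intro f
  rw [mem_closure_iff_nhds]
  intro U hU
  have hU0 : U ∈ @nhds _
      ((⨅ (K : Set E) (_ : IsCompact K) (_ : K.Nonempty),
        TopologicalSpace.induced
          (fun g : BoundedContinuousFunction E ℝ => UniformFun.ofFun fun x : K => g x)
          inferInstance) ⊓
       ⨅ s : SignedMeasure E,
        TopologicalSpace.induced
          (fun g : BoundedContinuousFunction E ℝ => intSM' s ⇑g) inferInstance) f := hU
  have hsplit := _root_.nhds_inf
    (t₁ := ⨅ (K : Set E) (_ : IsCompact K) (_ : K.Nonempty),
        TopologicalSpace.induced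
          (fun g : BoundedContinuousFunction E ℝ => UniformFun.ofFun fun x : K => g x)
          inferInstance)
    (t₂ := ⨅ s : SignedMeasure E,
        TopologicalSpace.induced
          (fun g : BoundedContinuousFunction E ℝ => intSM' s ⇑g) inferInstance)
    (a := f)
  have h1 : @nhds _ (⨅ (K : Set E) (_ : IsCompact K) (_ : K.Nonempty),
        TopologicalSpace.induced
          (fun g : BoundedContinuousFunction E ℝ => UniformFun.ofFun fun x : K => g x)
          inferInstance) f =
      ⨅ (K : Set E), ⨅ (_ : IsCompact K), ⨅ (_ : K.Nonempty),
        Filter.comap (fun g : BoundedContinuousFunction E ℝ => UniformFun.ofFun fun x : K => g x)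
          (𝓝 (UniformFun.ofFun fun x : K => f x)) := by
    rw [_root_.nhds_iInf]
    refine iInf_congr fun K => ?_
    rw [_root_.nhds_iInf]
    refine iInf_congr fun hK => ?_
    rw [_root_.nhds_iInf]
    refine iInf_congr fun hn => ?_
    exact nhds_induced _ _
  have h2 : @nhds _ (⨅ s : SignedMeasure E,
        TopologicalSpace.induced
          (fun g : BoundedContinuousFunction E ℝ => intSM' s ⇑g) inferInstance) f =
      ⨅ s : SignedMeasure E,
        Filter.comap (fun g : BoundedContinuousFunction E ℝ => intSM' s ⇑g)
          (𝓝 (intSM' s ⇑f)) := by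
    rw [_root_.nhds_iInf]
    exact iInf_congr fun s => nhds_induced _ _
  rw [hsplit, h1, h2] at hU0
  obtain ⟨V, hV, W, hW, rfl⟩ := Filter.mem_inf_iff.mp hU0
  obtain ⟨K, hKc, δ1, hδ1, hVs⟩ := helperK f hV
  obtain ⟨I, δ2, hδ2, hWs⟩ := helperM f hW
  set μ : Measure E :=
    ∑ s ∈ I, (s.toJordanDecomposition.posPart + s.toJordanDecomposition.negPart) with hμ
  haveI : IsFiniteMeasure μ := by
    constructor
    rw [hμ, MeasureTheory.Measure.finset_sum_apply]
    exact ENNReal.sum_lt_top.mpr fun s _ => measure_lt_top _ _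
  set T : ℝ := (μ Set.univ).toReal + 2 * ‖f‖ with hT
  have hT0 : 0 ≤ T := by positivity
  set εa : ℝ := δ2 / (T + 1) with hεa
  have hεa0 : 0 < εa := by positivity
  obtain ⟨C, hCc, hCμ⟩ := tightE hB e μ (ε := ENNReal.ofReal εa)
    (ENNReal.ofReal_pos.mpr hεa0).ne'
  obtain ⟨g, hgUC, hgn, hga⟩ := lipapprox f (hCc.union hKc)
    (ε := min εa (δ1 / 2)) (lt_min hεa0 (by linarith))
  have hptwise : ∀ x : E, |g x - f x| ≤ 2 * ‖f‖ := by
    intro x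
    have h1 : |g x| ≤ ‖f‖ := by
      have := g.norm_coe_le_norm x
      rw [Real.norm_eq_abs] at this
      linarith [this.trans hgn]
    have h2 : |f x| ≤ ‖f‖ := by
      have := f.norm_coe_le_norm x
      rwa [Real.norm_eq_abs] at this
    have := abs_sub (g x) (f x)
    linarith [abs_le.mp h1, abs_le.mp h2, abs_sub_abs_le_abs_sub (g x) (f x),
      abs_sub (g x) (f x)]
  refine ⟨g, ⟨⟨?_, ?_⟩, hgUC⟩⟩
  · -- g ∈ V
    refine hVs g fun x hx => ?_
    have := hga x (Or.inr hx)
    rw [Real.dist_eq]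
    calc |g x - f x| ≤ min εa (δ1 / 2) := this
      _ ≤ δ1 / 2 := min_le_right _ _
      _ < δ1 := by linarith
  · -- g ∈ W
    refine hWs g fun s hs => ?_
    have hCm : MeasurableSet C := hCc.isClosed.measurableSet
    have hb := intSM'_diff_bound s f g hCm (le_of_lt hεa0) (by positivity)
      (fun x hx => ((hga x (Or.inl hx)).trans (min_le_left _ _))) hptwise
    set νp := s.toJordanDecomposition.posPart with hνp
    set νn := s.toJordanDecomposition.negPart with hνn
    have hsum : ∀ A : Set E, νp A + νn A ≤ μ A := by
      intro A
      rw [hμ, MeasureTheory.Measure.finset_sum_apply]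
      have h0 : (νp + νn) A = νp A + νn A := rfl
      rw [← h0]
      exact Finset.single_le_sum
        (f := fun t => (t.toJordanDecomposition.posPart + t.toJordanDecomposition.negPart) A)
        (fun t _ => zero_le) hs
    have huniv : (νp Set.univ).toReal + (νn Set.univ).toReal ≤ (μ Set.univ).toReal := by
      rw [← ENNReal.toReal_add (measure_ne_top νp _) (measure_ne_top νn _)]
      exact ENNReal.toReal_mono (measure_ne_top μ _) (hsum Set.univ)
    have hcompl : (νp Cᶜ).toReal + (νn Cᶜ).toReal ≤ εa := by
      rw [← ENNReal.toReal_add (measure_ne_top νp _) (measure_ne_top νn _)]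
      refine ENNReal.toReal_le_of_le_ofReal hεa0.le ?_
      exact (hsum Cᶜ).trans hCμ.le
    have hfin : εa * ((νp Set.univ).toReal + (νn Set.univ).toReal)
        + 2 * ‖f‖ * ((νp Cᶜ).toReal + (νn Cᶜ).toReal) ≤ εa * T := by
      have e1 := mul_le_mul_of_nonneg_left huniv hεa0.le
      have e2 := mul_le_mul_of_nonneg_left hcompl (by positivity : (0:ℝ) ≤ 2 * ‖f‖)
      rw [hT]
      nlinarith [norm_nonneg f]
    have hlt : εa * T < δ2 := by
      have h1 : εa * (T + 1) = δ2 := by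
        rw [hεa]
        field_simp
      nlinarith
    exact lt_of_le_of_lt (hb.trans hfin) hlt
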